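/- Let n ≥ 2, let U ⊆ ℂⁿ be a connected open set on which the coordinates λ₁,…,λₙ are pairwise distinct, and let A₁,…,Aₙ : U → M₂(ℂ) be differentiable maps satisfying the Schlesinger equations: ∂A_j/∂λ_i = [A_i,A_j]/(λ_i−λ_j) for all i ≠ j and ∂A_i/∂λ_i = −Σ_{j≠i}[A_i,A_j]/(λ_i−λ_j) for all i. Then for every j the functions tr A_j, tr(A_j²), and det A_j are constant on U; in particular, the eigenvalues of each A_j are integrals of motion of the Schlesinger system. -/

import Mathlib

set_option maxHeartbeats 1000000
set_option synthInstance.maxHeartbeats 400000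


/-!
Statement 6: for solutions of the Schlesinger equations on a connected open
set, the functions `tr A_j`, `tr(A_j²)` and `det A_j` are constant, i.e. the
eigenvalues of each `A_j` are integrals of motion.
-/

attribute [local instance] Matrix.normedAddCommGroup Matrix.normedSpace

/-- Partial derivative of `f` with respect to the `i`-th coordinate at `x`. -/
noncomputable def pderiv' {E : Type*} [NormedAddCommGroup E] [NormedSpace ℂ E]
    {n : ℕ} (i : Fin n) (f : (Fin n → ℂ) → E) (x : Fin n → ℂ) : E :=
  deriv (fun s => f (Function.update x i s)) (x i)

section Aux

open Matrix

abbrev Mat2 := Matrix (Fin 2) (Fin 2) ℂ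

/-- Entry evaluation as a continuous linear map. -/
noncomputable def entryCLM (a b : Fin 2) : Mat2 →L[ℂ] ℂ :=
  LinearMap.toContinuousLinearMap
    { toFun := fun M => M a b
      map_add' := fun _ _ => rfl
      map_smul' := fun _ _ => rfl }

lemma entryCLM_apply (a b : Fin 2) (M : Mat2) : entryCLM a b M = M a b := rfl

lemma hasDerivAt_entry {h : ℂ → Mat2} {D : Mat2} {s : ℂ} (hh : HasDerivAt h D s)
    (a b : Fin 2) : HasDerivAt (fun s => h s a b) (D a b) s :=
  ((entryCLM a b).hasFDerivAt.comp_hasDerivAt s hh :)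

lemma hasDerivAt_trace {h : ℂ → Mat2} {D : Mat2} {s : ℂ} (hh : HasDerivAt h D s) :
    HasDerivAt (fun s => Matrix.trace (h s)) (Matrix.trace D) s := by
  have : ∀ M : Mat2, Matrix.trace M = ∑ a : Fin 2, M a a := fun M => rfl
  simp only [this]
  exact HasDerivAt.fun_sum fun a _ => hasDerivAt_entry hh a a

lemma trace_mul_eq (M N : Mat2) :
    Matrix.trace (M * N) = ∑ a : Fin 2, ∑ b : Fin 2, M a b * N b a := by
  simp [Matrix.trace, Matrix.diag, Matrix.mul_apply]

lemma hasDerivAt_trace_sq {h : ℂ → Mat2} {D : Mat2} {s : ℂ} (hh : HasDerivAt h D s) :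
    HasDerivAt (fun s => Matrix.trace (h s * h s))
      (Matrix.trace (D * h s) + Matrix.trace (h s * D)) s := by
  simp only [trace_mul_eq]
  rw [← Finset.sum_add_distrib]
  simp only [← Finset.sum_add_distrib]
  exact HasDerivAt.fun_sum fun a _ => HasDerivAt.fun_sum fun b _ =>
    (hasDerivAt_entry hh a b).mul (hasDerivAt_entry hh b a)

lemma det_eq_trace (M : Mat2) :
    Matrix.det M = (Matrix.trace M * Matrix.trace M - Matrix.trace (M * M)) / 2 := by
  simp [Matrix.det_fin_two, Matrix.trace_fin_two, Matrix.mul_apply, Fin.sum_univ_two]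
  ring

lemma trace_comm (P Q : Mat2) : Matrix.trace (P * Q - Q * P) = 0 := by
  rw [Matrix.trace_sub, Matrix.trace_mul_comm, sub_self]

lemma trace_comm_mul_right (P Q : Mat2) : Matrix.trace ((P * Q - Q * P) * Q) = 0 := by
  rw [sub_mul, Matrix.trace_sub, Matrix.trace_mul_cycle P Q Q, sub_self]

lemma trace_mul_comm_left (P Q : Mat2) : Matrix.trace (Q * (P * Q - Q * P)) = 0 := by
  rw [Matrix.trace_mul_comm, trace_comm_mul_right]

lemma trace_comm_mul_left (P Q : Mat2) : Matrix.trace ((P * Q - Q * P) * P) = 0 := by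
  have : (P * Q - Q * P) = -(Q * P - P * Q) := (neg_sub _ _).symm
  rw [this, neg_mul, Matrix.trace_neg, trace_comm_mul_right Q P, neg_zero]

lemma clm_eq_zero {n : ℕ} {L : (Fin n → ℂ) →L[ℂ] ℂ}
    (h : ∀ i, L (Pi.single i 1) = 0) : L = 0 := by
  ext v
  have hv : v = ∑ i : Fin n, Pi.single i (v i) := (Finset.univ_sum_single v).symm
  rw [ContinuousLinearMap.zero_apply, hv, map_sum]
  refine Finset.sum_eq_zero fun i _ => ?_
  have : Pi.single i (v i) = v i • (Pi.single i 1 : Fin n → ℂ) := by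
    rw [← Pi.single_smul, smul_eq_mul, mul_one]
  rw [this, L.map_smul, h, smul_zero]

/-- A differentiable function with vanishing derivative on a connected open set is constant. -/
lemma const_of_fderiv_zero {n : ℕ} {U : Set (Fin n → ℂ)} (hU : IsOpen U)
    (hUconn : IsPreconnected U) {g : (Fin n → ℂ) → ℂ}
    (hg : DifferentiableOn ℂ g U) (hz : ∀ x ∈ U, fderiv ℂ g x = 0) :
    ∀ x ∈ U, ∀ y ∈ U, g x = g y := by
  haveI : PreconnectedSpace U := isPreconnected_iff_preconnectedSpace.1 hUconn
  have hloc : IsLocallyConstant (fun p : U => g p) := by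
    rw [IsLocallyConstant.iff_exists_open]
    rintro ⟨x, hx⟩
    obtain ⟨ε, hε, hball⟩ := Metric.isOpen_iff.1 hU x hx
    refine ⟨Subtype.val ⁻¹' Metric.ball x ε, Metric.isOpen_ball.preimage continuous_subtype_val,
      Set.mem_preimage.2 (Metric.mem_ball_self hε), ?_⟩
    rintro ⟨y, hy⟩ hyb
    have hyb' : y ∈ Metric.ball x ε := Set.mem_preimage.1 hyb
    refine (convex_ball x ε).is_const_of_fderivWithin_eq_zero
      (hg.mono hball) (fun z hz' => ?_) hyb' (Metric.mem_ball_self hε)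
    rw [fderivWithin_of_isOpen Metric.isOpen_ball hz']
    exact hz z (hball hz')
  intro x hx y hy
  exact hloc.apply_eq_of_preconnectedSpace ⟨x, hx⟩ ⟨y, hy⟩

end Aux

theorem schlesinger_spectral_invariants
    (n : ℕ) (hn : 2 ≤ n)
    (U : Set (Fin n → ℂ)) (hU : IsOpen U) (hUconn : IsConnected U)
    (hdist : ∀ x ∈ U, ∀ i j : Fin n, i ≠ j → x i ≠ x j)
    (A : Fin n → (Fin n → ℂ) → Matrix (Fin 2) (Fin 2) ℂ)
    (hA : ∀ j, DifferentiableOn ℂ (A j) U)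
    (hSchOff : ∀ x ∈ U, ∀ i j : Fin n, i ≠ j →
      pderiv' i (A j) x = (x i - x j)⁻¹ • (A i x * A j x - A j x * A i x))
    (hSchDiag : ∀ x ∈ U, ∀ i : Fin n,
      pderiv' i (A i) x =
        -∑ j ∈ Finset.univ.erase i,
          (x i - x j)⁻¹ • (A i x * A j x - A j x * A i x)) :
    ∀ j : Fin n,
      (∃ c : ℂ, ∀ x ∈ U, Matrix.trace (A j x) = c) ∧
      (∃ c : ℂ, ∀ x ∈ U, Matrix.trace (A j x * A j x) = c) ∧
      (∃ c : ℂ, ∀ x ∈ U, Matrix.det (A j x) = c) := by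
  intro j
  obtain ⟨x₀, hx₀⟩ := hUconn.nonempty
  -- differentiability of the two scalar functions
  have hg1 : DifferentiableOn ℂ (fun x => Matrix.trace (A j x)) U := by
    have : ∀ x, Matrix.trace (A j x) = ∑ a : Fin 2, entryCLM a a (A j x) := fun x => rfl
    simp only [this]
    exact DifferentiableOn.fun_sum fun a _ =>
      ((entryCLM a a).differentiable.comp_differentiableOn (hA j))
  have hg2 : DifferentiableOn ℂ (fun x => Matrix.trace (A j x * A j x)) U := by
    have : ∀ x, Matrix.trace (A j x * A j x)
        = ∑ a : Fin 2, ∑ b : Fin 2, entryCLM a b (A j x) * entryCLM b a (A j x) := fun x =>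
      trace_mul_eq _ _
    simp only [this]
    exact DifferentiableOn.fun_sum fun a _ => DifferentiableOn.fun_sum fun b _ =>
      DifferentiableOn.mul
        ((entryCLM a b).differentiable.comp_differentiableOn (hA j))
        ((entryCLM b a).differentiable.comp_differentiableOn (hA j))
  -- key pointwise derivative computation
  have key : ∀ x ∈ U, ∀ i : Fin n,
      Matrix.trace (pderiv' i (A j) x) = 0 ∧
      Matrix.trace (pderiv' i (A j) x * A j x) = 0 ∧
      Matrix.trace (A j x * pderiv' i (A j) x) = 0 := by
    intro x hx i
    rcases eq_or_ne i j with rfl | hij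
    · rw [hSchDiag x hx i]
      refine ⟨?_, ?_, ?_⟩
      · rw [Matrix.trace_neg, Matrix.trace_sum]
        simp only [Matrix.trace_smul, trace_comm, smul_zero, Finset.sum_const_zero, neg_zero]
      · rw [neg_mul, Matrix.trace_neg, Finset.sum_mul, Matrix.trace_sum]
        simp only [smul_mul_assoc, Matrix.trace_smul, trace_comm_mul_left, smul_zero,
          Finset.sum_const_zero, neg_zero]
      · rw [mul_neg, Matrix.trace_neg, Finset.mul_sum, Matrix.trace_sum]
        simp only [mul_smul_comm, Matrix.trace_smul]
        have : ∀ k : Fin n, Matrix.trace (A i x * (A i x * A k x - A k x * A i x)) = 0 := by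
          intro k
          rw [Matrix.trace_mul_comm, trace_comm_mul_left]
        simp only [this, smul_zero, Finset.sum_const_zero, neg_zero]
    · rw [hSchOff x hx i j hij]
      refine ⟨?_, ?_, ?_⟩
      · rw [Matrix.trace_smul, trace_comm, smul_zero]
      · rw [smul_mul_assoc, Matrix.trace_smul, trace_comm_mul_right, smul_zero]
      · rw [mul_smul_comm, Matrix.trace_smul, trace_mul_comm_left, smul_zero]
  -- fderiv of the scalar invariants vanishes
  have hfd : ∀ x ∈ U, ∀ i : Fin n,
      (fderiv ℂ (fun x => Matrix.trace (A j x)) x) (Pi.single i 1) = 0 ∧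
      (fderiv ℂ (fun x => Matrix.trace (A j x * A j x)) x) (Pi.single i 1) = 0 := by
    intro x hx i
    have hxU : U ∈ nhds x := hU.mem_nhds hx
    have hdA : DifferentiableAt ℂ (A j) x := (hA j).differentiableAt hxU
    have hupd : Function.update x i (x i) = x := Function.update_eq_self i x
    have hl : HasDerivAt (Function.update x i) (Pi.single i (1 : ℂ)) (x i) :=
      hasDerivAt_update x i (x i)
    have hdA' : HasFDerivAt (A j) (fderiv ℂ (A j) x) (Function.update x i (x i)) := by
      rw [hupd]; exact hdA.hasFDerivAt
    have hcomp : HasDerivAt (fun s => A j (Function.update x i s))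
        ((fderiv ℂ (A j) x) (Pi.single i 1)) (x i) := hdA'.comp_hasDerivAt (x i) hl
    have hDval : pderiv' i (A j) x = (fderiv ℂ (A j) x) (Pi.single i 1) := hcomp.deriv
    obtain ⟨k1, k2, k3⟩ := key x hx i
    rw [hDval] at k1 k2 k3
    constructor
    · have h1 : HasDerivAt (fun s => Matrix.trace (A j (Function.update x i s)))
          (Matrix.trace ((fderiv ℂ (A j) x) (Pi.single i 1))) (x i) := hasDerivAt_trace hcomp
      have h2 : HasDerivAt (fun s => Matrix.trace (A j (Function.update x i s)))
          ((fderiv ℂ (fun x => Matrix.trace (A j x)) x) (Pi.single i 1)) (x i) := by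
        have hgd : DifferentiableAt ℂ (fun x => Matrix.trace (A j x)) x :=
          hg1.differentiableAt hxU
        have hgd' : HasFDerivAt (fun x => Matrix.trace (A j x))
            (fderiv ℂ (fun x => Matrix.trace (A j x)) x) (Function.update x i (x i)) := by
          rw [hupd]; exact hgd.hasFDerivAt
        exact hgd'.comp_hasDerivAt (x i) hl
      rw [h2.unique h1, k1]
    · have h1 : HasDerivAt (fun s => Matrix.trace (A j (Function.update x i s) *
            A j (Function.update x i s)))
          (Matrix.trace ((fderiv ℂ (A j) x) (Pi.single i 1) * A j (Function.update x i (x i))) +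
            Matrix.trace (A j (Function.update x i (x i)) *
              (fderiv ℂ (A j) x) (Pi.single i 1))) (x i) := hasDerivAt_trace_sq hcomp
      rw [hupd] at h1
      have h2 : HasDerivAt (fun s => Matrix.trace (A j (Function.update x i s) *
            A j (Function.update x i s)))
          ((fderiv ℂ (fun x => Matrix.trace (A j x * A j x)) x) (Pi.single i 1)) (x i) := by
        have hgd : DifferentiableAt ℂ (fun x => Matrix.trace (A j x * A j x)) x :=
          hg2.differentiableAt hxU
        have hgd' : HasFDerivAt (fun x => Matrix.trace (A j x * A j x))
            (fderiv ℂ (fun x => Matrix.trace (A j x * A j x)) x) (Function.update x i (x i)) := by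
          rw [hupd]; exact hgd.hasFDerivAt
        exact hgd'.comp_hasDerivAt (x i) hl
      rw [h2.unique h1, k2, k3, add_zero]
  have hz1 : ∀ x ∈ U, fderiv ℂ (fun x => Matrix.trace (A j x)) x = 0 :=
    fun x hx => clm_eq_zero fun i => (hfd x hx i).1
  have hz2 : ∀ x ∈ U, fderiv ℂ (fun x => Matrix.trace (A j x * A j x)) x = 0 :=
    fun x hx => clm_eq_zero fun i => (hfd x hx i).2
  have hc1 := const_of_fderiv_zero hU hUconn.isPreconnected hg1 hz1
  have hc2 := const_of_fderiv_zero hU hUconn.isPreconnected hg2 hz2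
  refine ⟨⟨Matrix.trace (A j x₀), fun x hx => hc1 x hx x₀ hx₀⟩,
    ⟨Matrix.trace (A j x₀ * A j x₀), fun x hx => hc2 x hx x₀ hx₀⟩,
    ⟨Matrix.det (A j x₀), fun x hx => ?_⟩⟩
  rw [det_eq_trace, det_eq_trace, hc1 x hx x₀ hx₀, hc2 x hx x₀ hx₀]
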